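/- Let α ∈ (−1, 0) and d ≥ 2. There exist constants c, c′ > 0, depending only on α and d, with the following property. For every real s ≥ 1 and every A > 0, define g : ℤ^d → ℝ by g(x) = A(s − |x|) if |x| ≤ s and g(x) = 0 otherwise. Then Σ_{x, y ∈ ℤ^d} (g(x) − g(y))² μ_{xy} ≤ c · A² · s^{d−α} and Σ_{x ∈ ℤ^d} g(x)² ν_x ≥ c′ · A² · s^{d+2+α}. -/

import Mathlib

open scoped BigOperators

/-- ℓ∞ norm on ℤ^d, as a natural number. -/
def linf {d : ℕ} (x : Fin d → ℤ) : ℕ :=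
  Finset.univ.sup fun i => (x i).natAbs

/-- ℓ¹ norm on ℤ^d, as a natural number. -/
def l1 {d : ℕ} (x : Fin d → ℤ) : ℕ :=
  ∑ i, (x i).natAbs

/-- `ν x = (max(|x|,1))^α`. -/
noncomputable def nu (α : ℝ) {d : ℕ} (x : Fin d → ℤ) : ℝ :=
  ((max (linf x) 1 : ℕ) : ℝ) ^ α

/-- The conductance `μ x y = (max(|x|,|y|))^(-α)` if `|x-y|₁ = 1`, and `0` otherwise. -/
noncomputable def mu (α : ℝ) {d : ℕ} (x y : Fin d → ℤ) : ℝ :=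
  if l1 (x - y) = 1 then ((max (linf x) (linf y) : ℕ) : ℝ) ^ (-α) else 0

/-- `z 0, …, z m` is a path: consecutive points are at ℓ¹-distance one. -/
def IsPath {d : ℕ} (z : ℕ → Fin d → ℤ) (m : ℕ) : Prop :=
  ∀ i < m, l1 (z (i + 1) - z i) = 1

/-- The metric `ρ(x,y)`: `0` if `x = y`, otherwise the infimum of `∑ ν (z i)` over
paths from `x` to `y`. -/
noncomputable def rho (α : ℝ) {d : ℕ} (x y : Fin d → ℤ) : ℝ :=
  if x = y then 0
  else sInf {S : ℝ | ∃ (m : ℕ) (z : ℕ → Fin d → ℤ), IsPath z m ∧ z 0 = x ∧ z m = y ∧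
    S = ∑ i ∈ Finset.range (m + 1), nu α (z i)}

/-- `ρ_x(r) = (max(|x|,r))^α · r`. -/
noncomputable def rhox (α : ℝ) {d : ℕ} (x : Fin d → ℤ) (r : ℝ) : ℝ :=
  (max ((linf x : ℕ) : ℝ) r) ^ α * r

/-- `ρ_x⁻¹(r) = (max(|x|, r^{1/(1+α)}))^{-α} · r`, the inverse function of `ρ_x`. -/
noncomputable def rhoxInv (α : ℝ) {d : ℕ} (x : Fin d → ℤ) (r : ℝ) : ℝ :=
  (max ((linf x : ℕ) : ℝ) (r ^ (1 / (1 + α)))) ^ (-α) * r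

/-- `V(x,r) = ν(B(x,r))`, the ν-volume of the ℓ∞-ball of radius `r` about `x`. -/
noncomputable def V (α : ℝ) {d : ℕ} (x : Fin d → ℤ) (r : ℝ) : ℝ :=
  ∑' y : {y : Fin d → ℤ // ((linf (y - x) : ℕ) : ℝ) ≤ r}, nu α y.1

/-- `V_ρ(x,r) = ν(B_ρ(x,r))`, the ν-volume of the ρ-ball of radius `r` about `x`. -/
noncomputable def Vrho (α : ℝ) {d : ℕ} (x : Fin d → ℤ) (r : ℝ) : ℝ :=
  ∑' y : {y : Fin d → ℤ // rho α x y ≤ r}, nu α y.1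

namespace DTF

lemma linf_le_iff {d : ℕ} (x : Fin d → ℤ) (n : ℕ) : linf x ≤ n ↔ ∀ i, (x i).natAbs ≤ n := by
  simp [linf, Finset.sup_le_iff]

noncomputable def box (d n : ℕ) : Finset (Fin d → ℤ) := Fintype.piFinset fun _ => Finset.Icc (-(n:ℤ)) n

lemma mem_box {d n : ℕ} {x : Fin d → ℤ} : x ∈ box d n ↔ linf x ≤ n := by
  simp only [box, Fintype.mem_piFinset, Finset.mem_Icc, linf_le_iff]
  constructor
  · intro h i; have := h i; omega
  · intro h i; have := h i; omega

lemma card_box (d n : ℕ) : (box d n).card = (2*n+1)^d := by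
  rw [box, Fintype.card_piFinset]
  have : ((n:ℤ)+1+(n:ℤ)).toNat = 2*n+1 := by omega
  simp [Int.card_Icc, sub_neg_eq_add, this]

lemma linf_le_add {d : ℕ} (x y : Fin d → ℤ) : linf x ≤ linf y + linf (x - y) := by
  rw [linf_le_iff]
  intro i
  have h1 : (y i).natAbs ≤ linf y := Finset.le_sup (f := fun j => (y j).natAbs) (Finset.mem_univ i)
  have h2 : ((x - y) i).natAbs ≤ linf (x - y) := Finset.le_sup (f := fun j => ((x - y) j).natAbs) (Finset.mem_univ i)
  simp only [Pi.sub_apply] at h2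
  omega

lemma linf_le_l1 {d : ℕ} (x : Fin d → ℤ) : linf x ≤ l1 x := by
  apply Finset.sup_le
  intro i _
  exact Finset.single_le_sum (f := fun j => (x j).natAbs) (fun j _ => Nat.zero_le _) (Finset.mem_univ i)

lemma linf_sub_comm {d : ℕ} (x y : Fin d → ℤ) : linf (x - y) = linf (y - x) := by
  unfold linf; congr 1; funext i; simp only [Pi.sub_apply]; omega

end DTF

open DTF

/-- Let `α ∈ (−1,0)` and `d ≥ 2`. There are `c, c′ > 0`, depending
only on `α` and `d`, such that for every real `s ≥ 1` and every `A > 0`, the function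
`g(x) = A(s − |x|)` for `|x| ≤ s` and `g(x) = 0` otherwise satisfies
`∑_{x,y} (g(x) − g(y))² μ_{xy} ≤ c A² s^{d−α}` and
`∑_x g(x)² ν_x ≥ c′ A² s^{d+2+α}`. -/
theorem dirichlet_test_function (d : ℕ) (hd : 2 ≤ d) (α : ℝ)
    (hα₁ : -1 < α) (hα₂ : α < 0) :
    ∃ c c' : ℝ, 0 < c ∧ 0 < c' ∧
      ∀ s : ℝ, 1 ≤ s → ∀ A : ℝ, 0 < A →
        ∀ g : (Fin d → ℤ) → ℝ,
          (∀ x, g x = if ((linf x : ℕ) : ℝ) ≤ s then A * (s - (linf x : ℝ)) else 0) →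
          (∑' x : Fin d → ℤ, ∑' y : Fin d → ℤ, (g x - g y) ^ 2 * mu α x y) ≤
              c * A ^ 2 * s ^ ((d : ℝ) - α) ∧
            c' * A ^ 2 * s ^ ((d : ℝ) + 2 + α) ≤
              ∑' x : Fin d → ℤ, g x ^ 2 * nu α x := by
  refine ⟨4 * 21^d, 1 / 2^(d+2), by positivity, by positivity, ?_⟩
  intro s hs A hA g hg
  have hs0 : (0:ℝ) < s := lt_of_lt_of_le one_pos hs
  -- basic facts about g
  have hgmax : ∀ x : Fin d → ℤ, g x = A * max (s - (linf x : ℝ)) 0 := by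
    intro x; rw [hg x]; split_ifs with h
    · rw [max_eq_left (by linarith)]
    · push_neg at h
      rw [max_eq_right (by linarith), mul_zero]
  have hg0 : ∀ x : Fin d → ℤ, ¬ ((linf x : ℝ) ≤ s) → g x = 0 := by
    intro x h; rw [hg x, if_neg h]
  have hg0' : ∀ x : Fin d → ℤ, g x ≠ 0 → linf x ≤ ⌈s⌉₊ := by
    intro x h
    by_contra h'
    apply h
    apply hg0
    intro h''
    exact h' (by exact_mod_cast h''.trans (Nat.le_ceil s))
  have hgabs : ∀ x y : Fin d → ℤ, l1 (x - y) = 1 → |g x - g y| ≤ A := by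
    intro x y h
    have hl : linf (x - y) ≤ 1 := h ▸ linf_le_l1 (x - y)
    have h1 : linf x ≤ linf y + 1 := by have := linf_le_add x y; omega
    have h2 : linf y ≤ linf x + 1 := by
      have := linf_le_add y x
      rw [linf_sub_comm y x] at this
      omega
    have c1 : (linf x : ℝ) ≤ (linf y : ℝ) + 1 := by exact_mod_cast h1
    have c2 : (linf y : ℝ) ≤ (linf x : ℝ) + 1 := by exact_mod_cast h2
    rw [hgmax x, hgmax y, ← mul_sub, abs_mul, abs_of_pos hA]
    have h3 := abs_max_sub_max_le_abs (s - (linf x : ℝ)) (s - (linf y : ℝ)) 0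
    have h4 : |s - (linf x : ℝ) - (s - (linf y : ℝ))| ≤ 1 := by
      rw [abs_le]; constructor <;> linarith
    calc A * |max (s - (linf x : ℝ)) 0 - max (s - (linf y : ℝ)) 0|
        ≤ A * 1 := mul_le_mul_of_nonneg_left (h3.trans h4) hA.le
      _ = A := mul_one A
  constructor
  · -- Upper bound on the Dirichlet form
    set N : ℕ := ⌈s⌉₊ + 1 with hN
    have hNs : (N : ℝ) < s + 2 := by
      have := Nat.ceil_lt_add_one hs0.le
      push_cast [hN]
      linarith
    have hsupp : ∀ x y : Fin d → ℤ, (g x - g y) ^ 2 * mu α x y ≠ 0 →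
        linf x ≤ N ∧ linf (x - y) ≤ 1 := by
      intro x y h
      rcases mul_ne_zero_iff.mp h with ⟨h1, h2⟩
      have hl1 : l1 (x - y) = 1 := by
        by_contra h'
        exact h2 (by rw [mu, if_neg h'])
      have hl : linf (x - y) ≤ 1 := hl1 ▸ linf_le_l1 (x - y)
      refine ⟨?_, hl⟩
      have hgg : g x ≠ g y := fun h' => h1 (by rw [h']; ring)
      by_cases hx : g x = 0
      · have hy : g y ≠ 0 := fun h' => hgg (by rw [hx, h'])
        have := hg0' y hy
        have := linf_le_add x y
        omega
      · have := hg0' x hx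
        omega
    have hinner0 : ∀ x : Fin d → ℤ, x ∉ box d N →
        (∑' y : Fin d → ℤ, (g x - g y) ^ 2 * mu α x y) = 0 := by
      intro x hx
      have : ∀ y : Fin d → ℤ, (g x - g y) ^ 2 * mu α x y = 0 := by
        intro y
        by_contra h
        exact hx (mem_box.mpr (hsupp x y h).1)
      simp [this]
    -- neighbours
    have hnbr : ∀ x : Fin d → ℤ, ∀ y : Fin d → ℤ, linf (x - y) ≤ 1 →
        y ∈ Finset.image (fun z => x + z) (box d 1) := by
      intro x y hxy
      refine Finset.mem_image.mpr ⟨y - x, mem_box.mpr ?_, by ring⟩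
      rw [linf_sub_comm]; exact hxy
    have hbound : ∀ x : Fin d → ℤ, x ∈ box d N → ∀ y : Fin d → ℤ,
        (g x - g y) ^ 2 * mu α x y ≤ A ^ 2 * ((N + 1 : ℕ) : ℝ) ^ (-α) := by
      intro x hx y
      by_cases hl : l1 (x - y) = 1
      · rw [mu, if_pos hl]
        have h1 := hgabs x y hl
        have hsq : (g x - g y) ^ 2 ≤ A ^ 2 := by
          rcases abs_le.mp h1 with ⟨ha, hb⟩
          exact sq_le_sq' ha hb
        have hμ : ((max (linf x) (linf y) : ℕ) : ℝ) ^ (-α) ≤ ((N + 1 : ℕ) : ℝ) ^ (-α) := by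
          apply Real.rpow_le_rpow (Nat.cast_nonneg _) ?_ (by linarith)
          have hx' : linf x ≤ N := mem_box.mp hx
          have hy' : linf y ≤ linf x + 1 := by
            have := linf_le_add y x
            have h2 : linf (y - x) ≤ 1 := by
              rw [← linf_sub_comm x y]
              exact hl ▸ linf_le_l1 (x - y)
            omega
          exact_mod_cast (by omega : max (linf x) (linf y) ≤ N + 1)
        exact mul_le_mul hsq hμ (Real.rpow_nonneg (Nat.cast_nonneg _) _) (sq_nonneg A)
      · rw [mu, if_neg hl, mul_zero]
        positivity
    have hinner_le : ∀ x ∈ box d N,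
        (∑' y : Fin d → ℤ, (g x - g y) ^ 2 * mu α x y) ≤
          (3:ℝ) ^ d * (A ^ 2 * ((N + 1 : ℕ) : ℝ) ^ (-α)) := by
      intro x hx
      have hEq : (∑' y : Fin d → ℤ, (g x - g y) ^ 2 * mu α x y) =
          ∑ y ∈ Finset.image (fun z => x + z) (box d 1), (g x - g y) ^ 2 * mu α x y := by
        apply tsum_eq_sum
        intro y hy
        by_contra h
        exact hy (hnbr x y (hsupp x y h).2)
      rw [hEq]
      calc ∑ y ∈ Finset.image (fun z => x + z) (box d 1), (g x - g y) ^ 2 * mu α x y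
          ≤ (Finset.image (fun z => x + z) (box d 1)).card • (A ^ 2 * ((N + 1 : ℕ) : ℝ) ^ (-α)) :=
            Finset.sum_le_card_nsmul _ _ _ (fun y _ => hbound x hx y)
        _ = ((Finset.image (fun z => x + z) (box d 1)).card : ℝ) * (A ^ 2 * ((N + 1 : ℕ) : ℝ) ^ (-α)) :=
            nsmul_eq_mul _ _
        _ ≤ (3:ℝ) ^ d * (A ^ 2 * ((N + 1 : ℕ) : ℝ) ^ (-α)) := by
            apply mul_le_mul_of_nonneg_right ?_ (by positivity)
            have h1 : (Finset.image (fun z => x + z) (box d 1)).card ≤ 3 ^ d := by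
              calc (Finset.image (fun z => x + z) (box d 1)).card ≤ (box d 1).card :=
                    Finset.card_image_le
                _ = 3 ^ d := by rw [card_box]
            exact_mod_cast h1
    have hcardN : ((box d N).card : ℝ) ≤ (7 * s) ^ d := by
      rw [card_box]
      push_cast
      apply pow_le_pow_left₀ (by positivity)
      linarith [Nat.ceil_lt_add_one hs0.le]
    have hX : ((N + 1 : ℕ) : ℝ) ^ (-α) ≤ 4 * s ^ (-α) := by
      have h1 : ((N + 1 : ℕ) : ℝ) ≤ 4 * s := by push_cast; linarith [Nat.ceil_lt_add_one hs0.le]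
      calc ((N + 1 : ℕ) : ℝ) ^ (-α) ≤ (4 * s) ^ (-α) :=
            Real.rpow_le_rpow (Nat.cast_nonneg _) h1 (by linarith)
        _ = (4:ℝ) ^ (-α) * s ^ (-α) := Real.mul_rpow (by norm_num) hs0.le
        _ ≤ 4 * s ^ (-α) := by
            apply mul_le_mul_of_nonneg_right ?_ (Real.rpow_nonneg hs0.le _)
            calc (4:ℝ) ^ (-α) ≤ (4:ℝ) ^ (1:ℝ) :=
                  Real.rpow_le_rpow_of_exponent_le (by norm_num) (by linarith)
              _ = 4 := Real.rpow_one 4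
    have hsplit : s ^ ((d:ℝ) - α) = s ^ d * s ^ (-α) := by
      rw [show (d:ℝ) - α = (d:ℝ) + (-α) by ring, Real.rpow_add hs0, Real.rpow_natCast]
    calc (∑' x : Fin d → ℤ, ∑' y : Fin d → ℤ, (g x - g y) ^ 2 * mu α x y)
        = ∑ x ∈ box d N, ∑' y : Fin d → ℤ, (g x - g y) ^ 2 * mu α x y :=
          tsum_eq_sum hinner0
      _ ≤ (box d N).card • ((3:ℝ) ^ d * (A ^ 2 * ((N + 1 : ℕ) : ℝ) ^ (-α))) :=
          Finset.sum_le_card_nsmul _ _ _ hinner_le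
      _ = ((box d N).card : ℝ) * ((3:ℝ) ^ d * (A ^ 2 * ((N + 1 : ℕ) : ℝ) ^ (-α))) :=
          nsmul_eq_mul _ _
      _ ≤ (7 * s) ^ d * ((3:ℝ) ^ d * (A ^ 2 * (4 * s ^ (-α)))) := by
          apply mul_le_mul hcardN ?_ (by positivity) (by positivity)
          apply mul_le_mul_of_nonneg_left ?_ (by positivity)
          exact mul_le_mul_of_nonneg_left hX (by positivity)
      _ = 4 * 21 ^ d * A ^ 2 * (s ^ d * s ^ (-α)) := by
          rw [mul_pow, show (21:ℝ) ^ d = 7 ^ d * 3 ^ d by rw [← mul_pow]; norm_num]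
          ring
      _ = 4 * 21 ^ d * A ^ 2 * s ^ ((d:ℝ) - α) := by rw [hsplit]
  · -- Lower bound on the energy
    set m : ℕ := ⌊s / 2⌋₊ with hm
    have hm_le : (m : ℝ) ≤ s / 2 := Nat.floor_le (by positivity)
    have h2m : s / 2 ≤ 2 * (m:ℝ) + 1 := by
      rcases le_or_gt 2 s with h | h
      · have := Nat.lt_floor_add_one (s / 2)
        rw [← hm] at this
        linarith
      · have : (0:ℝ) ≤ (m:ℝ) := Nat.cast_nonneg m
        linarith
    have hterm : ∀ x ∈ box d m, A ^ 2 * s ^ 2 / 4 * s ^ α ≤ g x ^ 2 * nu α x := by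
      intro x hx
      rw [mem_box] at hx
      have hx' : (linf x : ℝ) ≤ s / 2 := le_trans (by exact_mod_cast hx) hm_le
      have hnux : s ^ α ≤ nu α x := by
        rw [nu]
        apply Real.rpow_le_rpow_of_nonpos ?_ ?_ hα₂.le
        · exact_mod_cast Nat.lt_of_lt_of_le Nat.zero_lt_one (le_max_right _ _)
        · push_cast [Nat.cast_max]
          exact max_le (by linarith) hs
      rw [hg x, if_pos (by linarith)]
      have e1 : (A * (s / 2)) ^ 2 ≤ (A * (s - (linf x : ℝ))) ^ 2 := by
        apply pow_le_pow_left₀ (by positivity)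
        apply mul_le_mul_of_nonneg_left (by linarith) hA.le
      calc A ^ 2 * s ^ 2 / 4 * s ^ α = (A * (s / 2)) ^ 2 * s ^ α := by ring
        _ ≤ (A * (s - (linf x : ℝ))) ^ 2 * nu α x :=
            mul_le_mul e1 hnux (Real.rpow_nonneg hs0.le α) (sq_nonneg _)
    have hsummable : Summable (fun x : Fin d → ℤ => g x ^ 2 * nu α x) := by
      apply summable_of_ne_finset_zero (s := box d ⌈s⌉₊)
      intro x hx
      rw [mem_box] at hx
      have : g x = 0 := by
        by_contra h
        exact hx (hg0' x h)
      rw [this]; ring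
    have hcard : (s / 2) ^ d ≤ ((box d m).card : ℝ) := by
      rw [card_box]
      push_cast
      exact pow_le_pow_left₀ (by positivity) h2m d
    have hsplit : s ^ ((d:ℝ) + 2 + α) = s ^ (d + 2) * s ^ α := by
      rw [show (d:ℝ) + 2 + α = ((d + 2 : ℕ) : ℝ) + α by push_cast; ring,
        Real.rpow_add hs0, Real.rpow_natCast]
    calc 1 / 2 ^ (d + 2) * A ^ 2 * s ^ ((d:ℝ) + 2 + α)
        = (s / 2) ^ d * (A ^ 2 * s ^ 2 / 4 * s ^ α) := by
          rw [hsplit, div_pow, pow_add]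
          ring
      _ ≤ ((box d m).card : ℝ) * (A ^ 2 * s ^ 2 / 4 * s ^ α) := by
          apply mul_le_mul_of_nonneg_right hcard
          positivity
      _ = (box d m).card • (A ^ 2 * s ^ 2 / 4 * s ^ α) := (nsmul_eq_mul _ _).symm
      _ ≤ ∑ x ∈ box d m, g x ^ 2 * nu α x := Finset.card_nsmul_le_sum _ _ _ hterm
      _ ≤ ∑' x : Fin d → ℤ, g x ^ 2 * nu α x :=
          Summable.sum_le_tsum _ (fun x _ => mul_nonneg (sq_nonneg _) (Real.rpow_nonneg (Nat.cast_nonneg _) _)) hsummable
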